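/- Suppose the formal power series y = ∑_{n≥0} y_n t^n ∈ R⟦t⟧ satisfies a_r(t)·y^{(r)}(t) + ⋯ + a_1(t)·y'(t) + a_0(t)·y(t) = 0, where y^{(i)} denotes the i-th formal derivative. Set s = r + d, extend the coefficient sequence by y_n = 0 for n < 0, and for 0 ≤ j ≤ s and n ∈ ℤ define b_j(n) = ∑_{i=0}^{r} a_{i, i−r+j} · (n−j)(n−j−1)⋯(n−j−i+1), where a_{i,k} denotes the coefficient of t^k in a_i(t) (taken to be 0 when k < 0 or k > d) and the integers are mapped into R. Then for every n ∈ ℤ one has b_0(n)·y_n + b_1(n)·y_{n−1} + ⋯ + b_s(n)·y_{n−s} = 0, and moreover b_0(n) = a_r(0) · n(n−1)⋯(n−r+1). -/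

import Mathlib

open Polynomial PowerSeries

theorem coeff_iterate_derivative {R : Type*} [CommRing R] (y : PowerSeries R) (i k : ℕ) :
    PowerSeries.coeff (R := R) k ((⇑(PowerSeries.derivative R))^[i] y) =
      (∏ m ∈ Finset.range i, (((k : ℤ) + i - m : ℤ) : R)) * PowerSeries.coeff (R := R) (k + i) y := by
  induction i generalizing k with
  | zero => simp
  | succ i ih =>
    rw [Function.iterate_succ_apply', PowerSeries.coeff_derivative, ih,
      Finset.prod_range_succ, show k + 1 + i = k + (i+1) from by omega]
    have hp : ∏ m ∈ Finset.range i, ((((k+1:ℕ):ℤ) + i - m : ℤ) : R)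
        = ∏ m ∈ Finset.range i, (((k:ℤ) + ((i+1:ℕ):ℤ) - m : ℤ) : R) := by
      refine Finset.prod_congr rfl fun m _ => ?_
      congr 1; push_cast; ring
    rw [hp]
    have hf : ((((k:ℤ) + ((i+1:ℕ):ℤ) - (i:ℕ) : ℤ)) : R) = ((k:ℕ):R) + 1 := by push_cast; ring
    rw [hf]
    ring

/-- if `y = ∑ yₙ tⁿ` satisfies `∑_{i=0}^r aᵢ(t)·y⁽ⁱ⁾(t) = 0` with
`deg aᵢ ≤ d`, then, with `s = r + d`, the extended coefficient sequence `Y : ℤ → R`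
(`Y n = yₙ` for `n ≥ 0` and `Y n = 0` for `n < 0`) satisfies the recurrence
`∑_{j=0}^s b_j(n)·Y(n-j) = 0` for all `n ∈ ℤ`, where
`b_j(n) = ∑_{i=0}^r a_{i,i-r+j}·(n-j)(n-j-1)⋯(n-j-i+1)`; moreover
`b_0(n) = a_r(0)·n(n-1)⋯(n-r+1)`. -/
theorem ode_to_recurrence (R : Type*) [CommRing R] (r d : ℕ)
    (a : Fin (r + 1) → Polynomial R) (ha : ∀ i, (a i).natDegree ≤ d)
    (y : PowerSeries R)
    (hy : ∑ i : Fin (r + 1),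
      ((a i : PowerSeries R) * (⇑(PowerSeries.derivative R))^[(i : ℕ)] y) = 0)
    (Y : ℤ → R)
    (hY0 : ∀ n : ℕ, Y (n : ℤ) = PowerSeries.coeff (R := R) n y)
    (hYneg : ∀ n : ℤ, n < 0 → Y n = 0)
    (ac : Fin (r + 1) → ℤ → R)
    (hac : ∀ (i : Fin (r + 1)) (k : ℤ),
      ac i k = if 0 ≤ k then (a i).coeff k.toNat else 0)
    (b : ℕ → ℤ → R)
    (hb : ∀ (j : ℕ) (n : ℤ), b j n =
      ∑ i : Fin (r + 1), ac i ((i : ℤ) - (r : ℤ) + (j : ℤ)) *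
        ∏ m ∈ Finset.range (i : ℕ), ((n - (j : ℤ) - (m : ℤ) : ℤ) : R)) :
    (∀ n : ℤ, ∑ j ∈ Finset.range (r + d + 1), b j n * Y (n - (j : ℤ)) = 0) ∧
    (∀ n : ℤ, b 0 n = (a (Fin.last r)).coeff 0 *
      ∏ m ∈ Finset.range r, ((n - (m : ℤ) : ℤ) : R)) := by
  constructor
  · intro n
    -- a term vanishes when the "index" p = n - r + i - k is less than i
    have hterm : ∀ (c : R) (i k : ℕ), (n - (r:ℤ) + i - k < i) →
        c * (∏ m ∈ Finset.range i, ((n - (r:ℤ) + i - k - m : ℤ) : R)) *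
          Y (n - (r:ℤ) + i - k) = 0 := by
      intro c i k hp
      rcases lt_or_ge (n - (r:ℤ) + i - k) 0 with h | h
      · rw [hYneg _ h, mul_zero]
      · have hmem : (n - (r:ℤ) + i - k).toNat ∈ Finset.range i :=
          Finset.mem_range.mpr (by omega)
        rw [Finset.prod_eq_zero hmem
          (by rw [show n - (r:ℤ) + i - k - ((n - (r:ℤ) + i - k).toNat : ℤ) = 0 from by omega];
              exact Int.cast_zero), mul_zero, zero_mul]
    simp_rw [hb, Finset.sum_mul]
    rw [Finset.sum_comm]
    have key : ∀ i : Fin (r+1),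
        (∑ j ∈ Finset.range (r+d+1), ac i ((i:ℤ) - (r:ℤ) + (j:ℤ)) *
          (∏ m ∈ Finset.range (i:ℕ), ((n - (j:ℤ) - (m:ℤ) : ℤ) : R)) * Y (n - (j:ℤ)))
        = ∑ k ∈ Finset.range (d+1), (a i).coeff k *
          (∏ m ∈ Finset.range (i:ℕ), ((n - (r:ℤ) + (i:ℕ) - k - m : ℤ) : R)) *
          Y (n - (r:ℤ) + (i:ℕ) - k) := by
      intro i
      have hi : (i:ℕ) ≤ r := Nat.lt_succ_iff.mp i.isLt
      have h1 : (∑ j ∈ Finset.range (r+d+1), ac i ((i:ℤ) - (r:ℤ) + (j:ℤ)) *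
          (∏ m ∈ Finset.range (i:ℕ), ((n - (j:ℤ) - (m:ℤ) : ℤ) : R)) * Y (n - (j:ℤ)))
          = ∑ j ∈ Finset.Ico (r - (i:ℕ)) (r - (i:ℕ) + (d+1)),
            ac i ((i:ℤ) - (r:ℤ) + (j:ℤ)) *
            (∏ m ∈ Finset.range (i:ℕ), ((n - (j:ℤ) - (m:ℤ) : ℤ) : R)) * Y (n - (j:ℤ)) := by
        refine (Finset.sum_subset (fun j hj => Finset.mem_range.mpr ?_) fun j hj hj' => ?_).symm
        · have := Finset.mem_Ico.mp hj; omega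
        · rw [Finset.mem_Ico] at hj'
          push_neg at hj'
          rcases lt_or_ge j (r - (i:ℕ)) with h | h
          · rw [hac, if_neg (by omega), zero_mul, zero_mul]
          · have hj2 : r - (i:ℕ) + (d+1) ≤ j := hj' h
            rw [hac, if_pos (by omega)]
            rw [Polynomial.coeff_eq_zero_of_natDegree_lt
              (lt_of_le_of_lt (ha i) (by omega)), zero_mul, zero_mul]
      rw [h1, Finset.sum_Ico_eq_sum_range]
      rw [show r - (i:ℕ) + (d+1) - (r - (i:ℕ)) = d + 1 from by omega]
      refine Finset.sum_congr rfl fun k hk => ?_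
      have hc : ac i ((i:ℤ) - (r:ℤ) + ((r - (i:ℕ) + k : ℕ) : ℤ)) = (a i).coeff k := by
        rw [hac, show (i:ℤ) - (r:ℤ) + ((r - (i:ℕ) + k : ℕ) : ℤ) = (k:ℤ) from by omega,
          if_pos (Int.natCast_nonneg k)]
        simp
      have hY : n - ((r - (i:ℕ) + k : ℕ) : ℤ) = n - (r:ℤ) + (i:ℕ) - k := by omega
      rw [hc, hY]
    rw [Finset.sum_congr rfl fun i _ => key i]
    rcases lt_or_ge n (r:ℤ) with hn | hn
    · refine Finset.sum_eq_zero fun i _ => Finset.sum_eq_zero fun k hk => ?_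
      exact hterm _ _ _ (by omega)
    · set N := (n - (r:ℤ)).toNat with hNdef
      have hN : (N:ℤ) = n - (r:ℤ) := Int.toNat_of_nonneg (by omega)
      have expand : ∀ i : Fin (r+1),
          PowerSeries.coeff (R := R) N ((a i : PowerSeries R) * (⇑(PowerSeries.derivative R))^[(i:ℕ)] y)
          = ∑ k ∈ Finset.range (d+1), (a i).coeff k *
            (∏ m ∈ Finset.range (i:ℕ), ((n - (r:ℤ) + (i:ℕ) - k - m : ℤ) : R)) *
            Y (n - (r:ℤ) + (i:ℕ) - k) := by
        intro i
        rw [PowerSeries.coeff_mul, Finset.Nat.sum_antidiagonal_eq_sum_range_succ_mk]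
        -- both sides equal the sum over range (N + d + 1) of the common term G
        have hG : ∀ k ∈ Finset.range (N+1),
            PowerSeries.coeff (R := R) k ((a i : PowerSeries R)) *
              PowerSeries.coeff (R := R) (N - k) ((⇑(PowerSeries.derivative R))^[(i:ℕ)] y)
            = (a i).coeff k *
              ((∏ m ∈ Finset.range (i:ℕ), ((n - (r:ℤ) + (i:ℕ) - k - m : ℤ) : R)) *
              Y (n - (r:ℤ) + (i:ℕ) - k)) := by
          intro k hk
          rw [Finset.mem_range] at hk
          rw [Polynomial.coeff_coe, _root_.coeff_iterate_derivative]
          have hprod : (∏ m ∈ Finset.range (i:ℕ), ((((N - k : ℕ):ℤ) + (i:ℕ) - m : ℤ) : R))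
              = ∏ m ∈ Finset.range (i:ℕ), ((n - (r:ℤ) + (i:ℕ) - k - m : ℤ) : R) :=
            Finset.prod_congr rfl fun m _ => by congr 1; omega
          have hYeq : Y (n - (r:ℤ) + (i:ℕ) - k) = PowerSeries.coeff (R := R) (N - k + (i:ℕ)) y := by
            rw [show n - (r:ℤ) + (i:ℕ) - k = ((N - k + (i:ℕ) : ℕ) : ℤ) from by omega, hY0]
          rw [hprod, hYeq]
        rw [Finset.sum_congr rfl hG]
        have hL : ∑ k ∈ Finset.range (N+1), (a i).coeff k *
              ((∏ m ∈ Finset.range (i:ℕ), ((n - (r:ℤ) + (i:ℕ) - k - m : ℤ) : R)) *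
              Y (n - (r:ℤ) + (i:ℕ) - k))
            = ∑ k ∈ Finset.range (N+d+1), (a i).coeff k *
              ((∏ m ∈ Finset.range (i:ℕ), ((n - (r:ℤ) + (i:ℕ) - k - m : ℤ) : R)) *
              Y (n - (r:ℤ) + (i:ℕ) - k)) := by
          refine Finset.sum_subset (fun k hk => Finset.mem_range.mpr ?_) fun k hk hk' => ?_
          · rw [Finset.mem_range] at hk; omega
          · rw [Finset.mem_range] at hk hk'
            rw [← mul_assoc]
            exact hterm _ _ _ (by omega)
        have hR : ∑ k ∈ Finset.range (d+1), (a i).coeff k *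
              (∏ m ∈ Finset.range (i:ℕ), ((n - (r:ℤ) + (i:ℕ) - k - m : ℤ) : R)) *
              Y (n - (r:ℤ) + (i:ℕ) - k)
            = ∑ k ∈ Finset.range (N+d+1), (a i).coeff k *
              ((∏ m ∈ Finset.range (i:ℕ), ((n - (r:ℤ) + (i:ℕ) - k - m : ℤ) : R)) *
              Y (n - (r:ℤ) + (i:ℕ) - k)) := by
          rw [Finset.sum_congr rfl fun k _ => mul_assoc _ _ _]
          refine Finset.sum_subset (fun k hk => Finset.mem_range.mpr ?_) fun k hk hk' => ?_
          · rw [Finset.mem_range] at hk; omega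
          · rw [Finset.mem_range] at hk hk'
            rw [Polynomial.coeff_eq_zero_of_natDegree_lt
              (lt_of_le_of_lt (ha i) (by omega)), zero_mul]
        rw [hL, hR]
      rw [Finset.sum_congr rfl fun i _ => (expand i).symm, ← map_sum, hy, map_zero]
  · intro n
    rw [hb]
    rw [Finset.sum_eq_single (Fin.last r)]
    · have h0 : ac (Fin.last r) (((Fin.last r : Fin (r+1)):ℤ) - (r:ℤ) + ((0:ℕ):ℤ))
          = (a (Fin.last r)).coeff 0 := by
        rw [hac, show ((Fin.last r : Fin (r+1)):ℤ) - (r:ℤ) + ((0:ℕ):ℤ) = 0 from by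
          simp [Fin.val_last], if_pos le_rfl]
        simp
      rw [h0]
      congr 1
      refine Finset.prod_congr (by simp [Fin.val_last]) fun m _ => ?_
      congr 1; simp
    · intro i _ hne
      have hi : (i:ℕ) < r := Fin.val_lt_last hne
      rw [hac, if_neg (by push_cast; omega), zero_mul]
    · intro h
      exact absurd (Finset.mem_univ _) h
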